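/- arXiv:2510.20978 — 7 statements merged into one kernel-verified Lean document; each statement's English description precedes it below -/
import Mathlib

section
/- Let g : [0,1] → ℝ be twice continuously differentiable with g'' > 0 on [0,1], and suppose |g'''(t)| ≤ 2θ·tan(2tθ)·g''(t) for all t ∈ [0,1], where 0 < θ < π/4. Then g(1) - g(0) - g'(0) ≤ (g''(0)/2)·θ⁻¹·∫₀¹ log(tan(θt + π/4)) dt. -/
open Real

private lemma stmt0_aux_div (s c θ : ℝ) (hs : s ≠ 0) (hc : c ≠ 0) :
    2 * θ / (2 * s * c) = 1 / c ^ 2 * θ / (s / c) := by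
  field_simp

theorem stmt_0 (g : ℝ → ℝ) (θ : ℝ) (hθ0 : 0 < θ) (hθ : θ < π / 4)
    (hg : ContDiff ℝ 3 g)
    (hpos : ∀ t ∈ Set.Icc (0:ℝ) 1, 0 < iteratedDeriv 2 g t)
    (hsc : ∀ t ∈ Set.Icc (0:ℝ) 1,
      |iteratedDeriv 3 g t| ≤ 2 * θ * Real.tan (2 * t * θ) * iteratedDeriv 2 g t) :
    g 1 - g 0 - deriv g 0 ≤
      (iteratedDeriv 2 g 0 / 2) *
        (θ⁻¹ * ∫ t in (0:ℝ)..1, Real.log (Real.tan (θ * t + π / 4))) := by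
  have hπ := Real.pi_pos
  set h := iteratedDeriv 2 g with hh
  set L : ℝ → ℝ := fun s => Real.log (Real.tan (θ * s + π / 4)) with hL
  -- differentiability facts
  have hgd : Differentiable ℝ g := hg.differentiable (by norm_num)
  have hdiffh : Differentiable ℝ h := hg.differentiable_iteratedDeriv 2 (by norm_num)
  have hconth3 : Continuous (iteratedDeriv 3 g) := hg.continuous_iteratedDeriv 3 (by norm_num)
  have hdh : ∀ t, HasDerivAt h (iteratedDeriv 3 g t) t := by
    intro t
    have e : iteratedDeriv 3 g = deriv h := by rw [hh, ← iteratedDeriv_succ]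
    rw [e]
    exact (hdiffh t).hasDerivAt
  have hdg1 : ∀ t, HasDerivAt (deriv g) (h t) t := by
    intro t
    have hd1 : Differentiable ℝ (iteratedDeriv 1 g) :=
      hg.differentiable_iteratedDeriv 1 (by norm_num)
    have e : h = deriv (deriv g) := by
      rw [hh, show (2:ℕ) = 1 + 1 from rfl, iteratedDeriv_succ, iteratedDeriv_one]
    rw [e]
    have := (hd1 t).hasDerivAt
    rw [iteratedDeriv_one] at this
    exact this.deriv ▸ ((by rwa [iteratedDeriv_one] at hd1 : Differentiable ℝ (deriv g)) t).hasDerivAt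
  have hcontg1 : Continuous (deriv g) := by
    have := hg.continuous_iteratedDeriv 1 (by norm_num)
    rwa [iteratedDeriv_one] at this
  -- trig facts on [0,1]
  have hcos2 : ∀ t ∈ Set.Icc (0:ℝ) 1, 0 < Real.cos (2 * t * θ) := by
    intro t ht
    apply Real.cos_pos_of_mem_Ioo
    constructor
    · nlinarith [ht.1, ht.2]
    · nlinarith [ht.1, ht.2]
  have huIoo : ∀ t ∈ Set.Icc (0:ℝ) 1, 0 < θ * t + π / 4 ∧ θ * t + π / 4 < π / 2 := by
    intro t ht
    constructor
    · nlinarith [ht.1, ht.2]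
    · nlinarith [ht.1, ht.2]
  -- derivative of L
  have hFd : ∀ t ∈ Set.Icc (0:ℝ) 1,
      HasDerivAt L (2 * θ / Real.cos (2 * t * θ)) t := by
    intro t ht
    obtain ⟨hu1, hu2⟩ := huIoo t ht
    have hcupos : 0 < Real.cos (θ * t + π / 4) :=
      Real.cos_pos_of_mem_Ioo ⟨by linarith, hu2⟩
    have hsupos : 0 < Real.sin (θ * t + π / 4) :=
      Real.sin_pos_of_pos_of_lt_pi hu1 (by linarith)
    have htanpos : 0 < Real.tan (θ * t + π / 4) :=
      Real.tan_pos_of_pos_of_lt_pi_div_two hu1 hu2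
    have h1 : HasDerivAt (fun s : ℝ => θ * s + π / 4) θ t := by
      simpa using ((hasDerivAt_id t).const_mul θ).add_const (π / 4)
    have h2 : HasDerivAt (fun s : ℝ => Real.tan (θ * s + π / 4))
        (1 / Real.cos (θ * t + π / 4) ^ 2 * θ) t :=
      by have := (Real.hasDerivAt_tan hcupos.ne').comp t h1; exact this
    have h3 := h2.log htanpos.ne'
    convert h3 using 1
    have hc2 : Real.cos (2 * t * θ) =
        2 * Real.sin (θ * t + π / 4) * Real.cos (θ * t + π / 4) := by
      have e : 2 * t * θ = 2 * (θ * t + π / 4) - π / 2 := by ring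
      rw [e, Real.cos_sub_pi_div_two, Real.sin_two_mul]
    rw [hc2, Real.tan_eq_sin_div_cos]
    exact stmt0_aux_div _ _ _ hsupos.ne' hcupos.ne'
  have hLcont : ContinuousOn L (Set.Icc 0 1) := fun x hx =>
    (hFd x hx).continuousAt.continuousWithinAt
  -- Step B : h t * cos(2tθ) ≤ h 0 on [0,1]
  have hB : ∀ t ∈ Set.Icc (0:ℝ) 1, h t * Real.cos (2 * t * θ) ≤ h 0 := by
    set φ : ℝ → ℝ := fun t => h t * Real.cos (2 * t * θ) with hφ
    have hφd : ∀ t, HasDerivAt φ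
        (iteratedDeriv 3 g t * Real.cos (2 * t * θ) +
          h t * (-Real.sin (2 * t * θ) * (2 * θ))) t := by
      intro t
      have hlin : HasDerivAt (fun s : ℝ => 2 * s * θ) (2 * θ) t := by
        simpa using ((hasDerivAt_id t).const_mul 2).mul_const θ
      have hc : HasDerivAt (fun s : ℝ => Real.cos (2 * s * θ))
          (-Real.sin (2 * t * θ) * (2 * θ)) t :=
        by have := (Real.hasDerivAt_cos (2 * t * θ)).comp t hlin; exact this
      exact (hdh t).mul hc
    have hanti : AntitoneOn φ (Set.Icc 0 1) := by
      apply antitoneOn_of_deriv_nonpos (convex_Icc 0 1)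
      · exact fun x _ => ((hφd x).continuousAt).continuousWithinAt
      · intro x hx
        exact ((hφd x).differentiableAt).differentiableWithinAt
      · intro x hx
        rw [interior_Icc] at hx
        have hx' : x ∈ Set.Icc (0:ℝ) 1 := ⟨le_of_lt hx.1, le_of_lt hx.2⟩
        rw [(hφd x).deriv]
        have hc := hcos2 x hx'
        have hp := hpos x hx'
        have hs := hsc x hx'
        have h3le : iteratedDeriv 3 g x ≤ 2 * θ * Real.tan (2 * x * θ) * h x :=
          le_trans (le_abs_self _) hs
        have htc : Real.tan (2 * x * θ) * Real.cos (2 * x * θ) = Real.sin (2 * x * θ) := by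
          rw [Real.tan_eq_sin_div_cos]
          field_simp
        have key : iteratedDeriv 3 g x * Real.cos (2 * x * θ) ≤
            2 * θ * Real.sin (2 * x * θ) * h x := by
          calc iteratedDeriv 3 g x * Real.cos (2 * x * θ)
              ≤ 2 * θ * Real.tan (2 * x * θ) * h x * Real.cos (2 * x * θ) :=
                mul_le_mul_of_nonneg_right h3le hc.le
            _ = 2 * θ * Real.sin (2 * x * θ) * h x := by rw [← htc]; ring
        linarith [key]
    intro t ht
    have := hanti (Set.left_mem_Icc.2 (by norm_num)) ht ht.1
    simpa [hφ] using this
  -- Step D : deriv g t ≤ deriv g 0 + (h 0 / (2θ)) * L t on [0,1]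
  have hD : ∀ t ∈ Set.Icc (0:ℝ) 1,
      deriv g t ≤ deriv g 0 + h 0 / (2 * θ) * L t := by
    set w : ℝ → ℝ := fun t =>
      2 * θ * deriv g 0 + h 0 * L t - 2 * θ * deriv g t with hw
    have hwd : ∀ t ∈ Set.Icc (0:ℝ) 1, HasDerivAt w
        (h 0 * (2 * θ / Real.cos (2 * t * θ)) - 2 * θ * h t) t := by
      intro t ht
      have h1 : HasDerivAt (fun s => 2 * θ * deriv g 0 + h 0 * L s)
          (h 0 * (2 * θ / Real.cos (2 * t * θ))) t :=
        ((hFd t ht).const_mul (h 0)).const_add _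
      exact h1.sub ((hdg1 t).const_mul (2 * θ))
    have hmono : MonotoneOn w (Set.Icc 0 1) := by
      apply monotoneOn_of_deriv_nonneg (convex_Icc 0 1)
      · exact fun x hx => ((hwd x hx).continuousAt).continuousWithinAt
      · intro x hx
        rw [interior_Icc] at hx
        exact ((hwd x (Set.Ioo_subset_Icc_self hx)).differentiableAt).differentiableWithinAt
      · intro x hx
        rw [interior_Icc] at hx
        have hx' : x ∈ Set.Icc (0:ℝ) 1 := Set.Ioo_subset_Icc_self hx
        rw [(hwd x hx').deriv]
        have hc := hcos2 x hx'
        have hB' := hB x hx'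
        have h2θ : (0:ℝ) ≤ 2 * θ := by linarith
        have : 2 * θ * h x ≤ h 0 * (2 * θ / Real.cos (2 * x * θ)) := by
          rw [mul_comm (h 0), div_mul_eq_mul_div, le_div_iff₀ hc]
          have := mul_le_mul_of_nonneg_left hB' h2θ
          linarith
        linarith
    intro t ht
    have hw0 : w 0 = 0 := by
      simp [hw, hL, Real.tan_pi_div_four]
    have := hmono (Set.left_mem_Icc.2 (by norm_num)) ht ht.1
    rw [hw0] at this
    have hwt : 0 ≤ 2 * θ * deriv g 0 + h 0 * L t - 2 * θ * deriv g t := this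
    have h2θ : (0:ℝ) < 2 * θ := by linarith
    have e : deriv g 0 + h 0 / (2 * θ) * L t - deriv g t =
        (2 * θ * deriv g 0 + h 0 * L t - 2 * θ * deriv g t) / (2 * θ) := by
      field_simp
    have hnn : 0 ≤ (2 * θ * deriv g 0 + h 0 * L t - 2 * θ * deriv g t) / (2 * θ) :=
      div_nonneg hwt h2θ.le
    rw [← e] at hnn
    linarith
  -- Step E : integrate
  have h01 : (0:ℝ) ≤ 1 := by norm_num
  have huIcc : Set.uIcc (0:ℝ) 1 = Set.Icc 0 1 := Set.uIcc_of_le h01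
  have hLint : IntervalIntegrable L MeasureTheory.volume 0 1 := by
    apply ContinuousOn.intervalIntegrable
    rwa [huIcc]
  have hg'int : IntervalIntegrable (deriv g) MeasureTheory.volume 0 1 :=
    hcontg1.intervalIntegrable 0 1
  have hftc : ∫ t in (0:ℝ)..1, deriv g t = g 1 - g 0 := by
    apply intervalIntegral.integral_deriv_eq_sub
    · exact fun x _ => hgd.differentiableAt
    · exact hg'int
  have hRint : IntervalIntegrable (fun t => deriv g 0 + h 0 / (2 * θ) * L t)
      MeasureTheory.volume 0 1 :=
    (intervalIntegrable_const).add (hLint.const_mul _)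
  have hmonoInt : ∫ t in (0:ℝ)..1, deriv g t ≤
      ∫ t in (0:ℝ)..1, (deriv g 0 + h 0 / (2 * θ) * L t) :=
    intervalIntegral.integral_mono_on h01 hg'int hRint hD
  have hRval : ∫ t in (0:ℝ)..1, (deriv g 0 + h 0 / (2 * θ) * L t) =
      deriv g 0 + h 0 / (2 * θ) * ∫ t in (0:ℝ)..1, L t := by
    rw [intervalIntegral.integral_add intervalIntegrable_const (hLint.const_mul _),
      intervalIntegral.integral_const_mul, intervalIntegral.integral_const]
    simp
  rw [hftc, hRval] at hmonoInt
  have hI : ∫ t in (0:ℝ)..1, L t = ∫ t in (0:ℝ)..1, Real.log (Real.tan (θ * t + π / 4)) := rfl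
  have hθne : θ ≠ 0 := ne_of_gt hθ0
  have : h 0 / (2 * θ) * ∫ t in (0:ℝ)..1, L t =
      h 0 / 2 * (θ⁻¹ * ∫ t in (0:ℝ)..1, Real.log (Real.tan (θ * t + π / 4))) := by
    rw [← hI]
    field_simp
  linarith [hmonoInt, this.le, this.ge]
end

section
/- Let g : [0,1] → ℝ be three times differentiable with g'' > 0 on [0,1], and suppose |g'''(t)| ≤ 2θ·tan(2tθ)·g''(t) for all t ∈ [0,1], where 0 < θ < π/4. Then g(1) - g(0) - g'(0) ≥ (g''(0)/2)·(sin²θ)/θ². -/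
open Real

theorem stmt_1 (g : ℝ → ℝ) (θ : ℝ) (hθ0 : 0 < θ) (hθ : θ < π / 4)
    (hg : ContDiff ℝ 3 g)
    (hpos : ∀ t ∈ Set.Icc (0:ℝ) 1, 0 < iteratedDeriv 2 g t)
    (hsc : ∀ t ∈ Set.Icc (0:ℝ) 1,
      |iteratedDeriv 3 g t| ≤ 2 * θ * Real.tan (2 * t * θ) * iteratedDeriv 2 g t) :
    g 1 - g 0 - deriv g 0 ≥
      (iteratedDeriv 2 g 0 / 2) * (Real.sin θ ^ 2 / θ ^ 2) := by
  set h0 : ℝ := iteratedDeriv 2 g 0 with hh0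
  have h0pos : 0 < h0 := hpos 0 (by norm_num)
  -- basic derivative facts
  have hlin : ∀ t : ℝ, HasDerivAt (fun t : ℝ => 2 * t * θ) (2 * θ) t := by
    intro t
    simpa using ((hasDerivAt_id t).const_mul 2).mul_const θ
  have hcosd : ∀ t : ℝ, HasDerivAt (fun t : ℝ => Real.cos (2 * t * θ))
      (-Real.sin (2 * t * θ) * (2 * θ)) t := fun t =>
    by have := (Real.hasDerivAt_cos (2 * t * θ)).comp t (hlin t); exact this
  have hsind : ∀ t : ℝ, HasDerivAt (fun t : ℝ => Real.sin (2 * t * θ))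
      (Real.cos (2 * t * θ) * (2 * θ)) t := fun t =>
    by have := (Real.hasDerivAt_sin (2 * t * θ)).comp t (hlin t); exact this
  have hcospos : ∀ t ∈ Set.Icc (0:ℝ) 1, 0 < Real.cos (2 * t * θ) := by
    intro t ht
    apply Real.cos_pos_of_mem_Ioo
    constructor
    · nlinarith [Real.pi_pos, ht.1, ht.2]
    · nlinarith [ht.1, ht.2]
  have hsinnn : ∀ t ∈ Set.Icc (0:ℝ) 1, 0 ≤ Real.sin (2 * t * θ) := by
    intro t ht
    apply Real.sin_nonneg_of_nonneg_of_le_pi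
    · nlinarith [ht.1]
    · nlinarith [Real.pi_pos, ht.1, ht.2]
  -- derivative of the second derivative
  have hdh : ∀ t : ℝ, HasDerivAt (iteratedDeriv 2 g) (iteratedDeriv 3 g t) t := by
    intro t
    have hdiff : Differentiable ℝ (iteratedDeriv 2 g) :=
      hg.differentiable_iteratedDeriv 2 (by norm_num)
    have := (hdiff t).hasDerivAt
    rwa [show iteratedDeriv 3 g t = deriv (iteratedDeriv 2 g) t by
      rw [iteratedDeriv_succ]]
  -- derivative of deriv g
  have hdg1 : ∀ t : ℝ, HasDerivAt (deriv g) (iteratedDeriv 2 g t) t := by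
    intro t
    have hdiff : Differentiable ℝ (iteratedDeriv 1 g) :=
      hg.differentiable_iteratedDeriv 1 (by norm_num)
    rw [iteratedDeriv_one] at hdiff
    have := (hdiff t).hasDerivAt
    rwa [show iteratedDeriv 2 g t = deriv (deriv g) t by
      rw [show (2:ℕ) = 1 + 1 from rfl, iteratedDeriv_succ, iteratedDeriv_one]]
  have hdg0 : ∀ t : ℝ, HasDerivAt g (deriv g t) t := by
    intro t
    exact ((hg.differentiable (by norm_num)) t).hasDerivAt
  -- Step A : h t ≥ h0 * cos (2 t θ) on [0,1]
  have hA : ∀ t ∈ Set.Icc (0:ℝ) 1, h0 * Real.cos (2 * t * θ) ≤ iteratedDeriv 2 g t := by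
    set G : ℝ → ℝ := fun t => iteratedDeriv 2 g t / Real.cos (2 * t * θ) with hG
    have hGd : ∀ t ∈ Set.Icc (0:ℝ) 1, HasDerivAt G
        ((iteratedDeriv 3 g t * Real.cos (2 * t * θ) -
          iteratedDeriv 2 g t * (-Real.sin (2 * t * θ) * (2 * θ))) /
            Real.cos (2 * t * θ) ^ 2) t := by
      intro t ht
      exact (hdh t).div (hcosd t) (ne_of_gt (hcospos t ht))
    have hGmono : MonotoneOn G (Set.Icc 0 1) := by
      apply monotoneOn_of_deriv_nonneg (convex_Icc 0 1)
      · exact fun t ht => ((hGd t ht).continuousAt).continuousWithinAt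
      · intro t ht
        rw [interior_Icc] at ht
        exact ((hGd t (Set.mem_Icc_of_Ioo ht)).differentiableAt).differentiableWithinAt
      · intro t ht
        rw [interior_Icc] at ht
        have ht' : t ∈ Set.Icc (0:ℝ) 1 := Set.mem_Icc_of_Ioo ht
        rw [(hGd t ht').deriv]
        have hc := hcospos t ht'
        apply div_nonneg _ (by positivity)
        have htan : Real.tan (2 * t * θ) * Real.cos (2 * t * θ) = Real.sin (2 * t * θ) := by
          rw [Real.tan_eq_sin_div_cos]
          field_simp
        have h3 := hsc t ht'
        have h3' : -(2 * θ * Real.tan (2 * t * θ) * iteratedDeriv 2 g t) ≤ iteratedDeriv 3 g t :=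
          neg_le_of_abs_le h3
        have h4 := mul_le_mul_of_nonneg_right h3' hc.le
        have h5 : -(2 * θ * Real.tan (2 * t * θ) * iteratedDeriv 2 g t) * Real.cos (2 * t * θ)
            = -(2 * θ * iteratedDeriv 2 g t * Real.sin (2 * t * θ)) := by
          rw [← htan]; ring
        nlinarith [h4, h5]
    intro t ht
    have := hGmono (Set.left_mem_Icc.2 (by norm_num)) ht ht.1
    have hG0 : G 0 = h0 := by simp [hG, hh0]
    rw [hG0] at this
    have hc := hcospos t ht
    calc h0 * Real.cos (2 * t * θ) ≤ G t * Real.cos (2 * t * θ) := by nlinarith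
    _ = iteratedDeriv 2 g t := by simp only [hG]; field_simp [hc.ne']
  -- Step B : φ t = deriv g t - deriv g 0 - h0 * sin(2tθ)/(2θ) is nonneg on [0,1]
  set φ : ℝ → ℝ := fun t => deriv g t - deriv g 0 - h0 * (Real.sin (2 * t * θ) / (2 * θ))
    with hφ
  have hφd : ∀ t : ℝ, HasDerivAt φ
      (iteratedDeriv 2 g t - h0 * (Real.cos (2 * t * θ) * (2 * θ) / (2 * θ))) t := by
    intro t
    exact ((hdg1 t).sub_const _).sub (((hsind t).div_const _).const_mul h0)
  have hφnn : ∀ t ∈ Set.Icc (0:ℝ) 1, 0 ≤ φ t := by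
    have hφmono : MonotoneOn φ (Set.Icc 0 1) := by
      apply monotoneOn_of_deriv_nonneg (convex_Icc 0 1)
      · exact fun t _ => ((hφd t).continuousAt).continuousWithinAt
      · exact fun t _ => ((hφd t).differentiableAt).differentiableWithinAt
      · intro t ht
        rw [interior_Icc] at ht
        have ht' : t ∈ Set.Icc (0:ℝ) 1 := Set.mem_Icc_of_Ioo ht
        rw [(hφd t).deriv]
        have := hA t ht'
        have h2θ : (2:ℝ) * θ ≠ 0 := by positivity
        rw [mul_div_assoc, div_self h2θ, mul_one]
        linarith
    intro t ht
    have := hφmono (Set.left_mem_Icc.2 (by norm_num)) ht ht.1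
    have : φ 0 ≤ φ t := this
    have hφ0 : φ 0 = 0 := by simp [hφ]
    linarith
  -- Step C : ψ t = g t - deriv g 0 * t + h0 * cos(2tθ)/(4θ²) is monotone on [0,1]
  set ψ : ℝ → ℝ := fun t => g t - deriv g 0 * t +
      h0 * (Real.cos (2 * t * θ) / (4 * θ ^ 2)) with hψ
  have hψd : ∀ t : ℝ, HasDerivAt ψ
      (deriv g t - deriv g 0 * 1 + h0 * (-Real.sin (2 * t * θ) * (2 * θ) / (4 * θ ^ 2))) t := by
    intro t
    exact ((hdg0 t).sub ((hasDerivAt_id t).const_mul _)).add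
      (((hcosd t).div_const _).const_mul h0)
  have hψmono : MonotoneOn ψ (Set.Icc 0 1) := by
    apply monotoneOn_of_deriv_nonneg (convex_Icc 0 1)
    · exact fun t _ => ((hψd t).continuousAt).continuousWithinAt
    · exact fun t _ => ((hψd t).differentiableAt).differentiableWithinAt
    · intro t ht
      rw [interior_Icc] at ht
      have ht' : t ∈ Set.Icc (0:ℝ) 1 := Set.mem_Icc_of_Ioo ht
      rw [(hψd t).deriv]
      have hnn := hφnn t ht'
      rw [hφ] at hnn
      have hθne : θ ≠ 0 := ne_of_gt hθ0
      have heq : -Real.sin (2 * t * θ) * (2 * θ) / (4 * θ ^ 2)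
          = -(Real.sin (2 * t * θ) / (2 * θ)) := by
        field_simp
        ring
      rw [heq]
      simp only at hnn ⊢
      linarith
  have hmono := hψmono (Set.left_mem_Icc.2 (by norm_num))
    (Set.right_mem_Icc.2 (by norm_num)) (by norm_num)
  have h10 : ψ 0 = g 0 + h0 * (1 / (4 * θ ^ 2)) := by simp [hψ]
  have h11 : ψ 1 = g 1 - deriv g 0 + h0 * ((1 - 2 * Real.sin θ ^ 2) / (4 * θ ^ 2)) := by
    simp only [hψ, mul_one]
    rw [Real.cos_two_mul, Real.cos_sq']
    ring
  have hexp : h0 / 2 * (Real.sin θ ^ 2 / θ ^ 2)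
      = h0 * (1 / (4 * θ ^ 2)) - h0 * ((1 - 2 * Real.sin θ ^ 2) / (4 * θ ^ 2)) := by
    field_simp
    ring
  rw [h10, h11] at hmono
  rw [ge_iff_le, hexp]
  linarith [hmono]
end

section
/- Define ψ(θ) := θ⁻¹ ∫₀¹ log(tan(θt + π/4)) dt for θ ∈ (0, π/4). Then ψ(θ) → 1 as θ → 0⁺, and ψ(θ) ≤ 3/2 for all θ ∈ (0, π/4). -/
open Real

noncomputable def psi (θ : ℝ) : ℝ :=
  θ⁻¹ * ∫ t in (0:ℝ)..1, Real.log (Real.tan (θ * t + π / 4))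

open Set Filter intervalIntegral

namespace PsiAux

noncomputable def gg (s : ℝ) : ℝ := Real.log (Real.tan (s + π / 4))

lemma pi4_pos : (0:ℝ) < π / 4 := by positivity

lemma pi4_lt_one : π / 4 < 1 := by nlinarith [Real.pi_lt_d2]

lemma cos_v_pos {s : ℝ} (h0 : 0 ≤ s) (h1 : s < π / 4) : 0 < Real.cos (s + π / 4) := by
  apply Real.cos_pos_of_mem_Ioo
  constructor
  · nlinarith [Real.pi_pos]
  · nlinarith [Real.pi_pos]

lemma sin_v_pos {s : ℝ} (h0 : 0 ≤ s) (h1 : s < π / 4) : 0 < Real.sin (s + π / 4) := by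
  apply Real.sin_pos_of_pos_of_lt_pi
  · nlinarith [Real.pi_pos]
  · nlinarith [Real.pi_pos]

lemma sin_v_ge {s : ℝ} (h0 : 0 ≤ s) (h1 : s ≤ π / 4) : 0.7 ≤ Real.sin (s + π / 4) := by
  have h2 : Real.sin (π/4) ≤ Real.sin (s + π/4) := by
    apply Real.sin_le_sin_of_le_of_le_pi_div_two
    · nlinarith [Real.pi_pos]
    · nlinarith [Real.pi_pos]
    · linarith
  rw [Real.sin_pi_div_four] at h2
  have h3 : (1.4:ℝ) ≤ Real.sqrt 2 := by
    nlinarith [Real.sq_sqrt (show (0:ℝ) ≤ 2 by norm_num), Real.sqrt_nonneg 2]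
  linarith

lemma tan_v_pos {s : ℝ} (h0 : 0 ≤ s) (h1 : s < π / 4) : 0 < Real.tan (s + π / 4) := by
  rw [Real.tan_eq_sin_div_cos]
  exact div_pos (sin_v_pos h0 h1) (cos_v_pos h0 h1)

lemma gg_zero : gg 0 = 0 := by
  simp [gg, Real.tan_pi_div_four]

lemma sincos (s : ℝ) : Real.sin (s + π/4) * Real.cos (s + π/4) = Real.cos (2*s) / 2 := by
  have h2 : Real.sqrt 2 ^ 2 = 2 := Real.sq_sqrt (by norm_num)
  rw [Real.sin_add, Real.cos_add, Real.sin_pi_div_four, Real.cos_pi_div_four,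
    Real.cos_two_mul']
  have hs := Real.sin_sq_add_cos_sq s
  nlinarith [hs, h2]

lemma cos2_pos {s : ℝ} (h0 : 0 ≤ s) (h1 : s < π / 4) : 0 < Real.cos (2*s) := by
  apply Real.cos_pos_of_mem_Ioo
  constructor
  · nlinarith [Real.pi_pos]
  · nlinarith [Real.pi_pos]

lemma gg_hasDeriv {s : ℝ} (h0 : 0 ≤ s) (h1 : s < π/4) :
    HasDerivAt gg (2 / Real.cos (2*s)) s := by
  have hc := cos_v_pos h0 h1
  have hs := sin_v_pos h0 h1
  have ht := tan_v_pos h0 h1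
  have h1' : HasDerivAt (fun x : ℝ => x + π/4) 1 s := (hasDerivAt_id s).add_const _
  have h2 : HasDerivAt (fun x : ℝ => Real.tan (x + π/4)) (1 / Real.cos (s+π/4)^2 * 1) s :=
    by have := (Real.hasDerivAt_tan hc.ne').comp s h1'; exact this
  have h3 : HasDerivAt gg ((Real.tan (s+π/4))⁻¹ * (1 / Real.cos (s+π/4)^2 * 1)) s :=
    (Real.hasDerivAt_log ht.ne').comp s h2
  convert h3 using 1
  have hsc : Real.cos (2*s) = 2 * (Real.sin (s+π/4) * Real.cos (s+π/4)) := by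
    linarith [sincos s]
  set c := Real.cos (s + π/4) with hcdef
  set si := Real.sin (s + π/4) with hsdef
  rw [hsc, Real.tan_eq_sin_div_cos, ← hcdef, ← hsdef, inv_div, mul_one, one_div]
  rw [div_mul_eq_mul_div, div_eq_div_iff (by positivity) (by positivity)]
  field_simp

lemma gg_cont : ContinuousOn gg (Ico 0 (π/4)) := fun s hs =>
  ((gg_hasDeriv hs.1 hs.2).continuousAt).continuousWithinAt

lemma gg_slope {θ s : ℝ} (hθ : θ < π/4) (h0 : 0 < s) (hs : s ≤ θ) :
    2*s ≤ gg s ∧ gg s ≤ 2 / Real.cos (2*θ) * s := by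
  have hs4 : s < π/4 := lt_of_le_of_lt hs hθ
  have hθ0 : 0 < θ := lt_of_lt_of_le h0 hs
  have hcont : ContinuousOn gg (Icc 0 s) :=
    gg_cont.mono (fun x hx => ⟨hx.1, lt_of_le_of_lt hx.2 hs4⟩)
  obtain ⟨c, hc, hceq⟩ := exists_hasDerivAt_eq_slope gg (fun c => 2 / Real.cos (2*c)) h0 hcont
      (fun x hx => gg_hasDeriv hx.1.le (hx.2.trans hs4))
  rw [gg_zero, sub_zero, sub_zero] at hceq
  have hc0 : 0 < c := hc.1
  have hcs : c < s := hc.2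
  have hcosc : 0 < Real.cos (2*c) := cos2_pos hc0.le (by linarith)
  have hcosθ : 0 < Real.cos (2*θ) := cos2_pos hθ0.le hθ
  have hmono : Real.cos (2*θ) ≤ Real.cos (2*c) := by
    apply Real.cos_le_cos_of_nonneg_of_le_pi (by linarith) (by nlinarith [Real.pi_pos]) (by linarith)
  have hle1 : Real.cos (2*c) ≤ 1 := Real.cos_le_one _
  have hggs : gg s = (2 / Real.cos (2*c)) * s := by
    rw [hceq]; field_simp
  constructor
  · rw [hggs]
    have h2 : (2:ℝ) ≤ 2 / Real.cos (2*c) := by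
      rw [le_div_iff₀ hcosc]; nlinarith
    nlinarith
  · rw [hggs]
    have h2 : 2 / Real.cos (2*c) ≤ 2 / Real.cos (2*θ) := by gcongr
    nlinarith

lemma gg_convex : ConvexOn ℝ (Ico 0 (π/4)) gg := by
  apply MonotoneOn.convexOn_of_deriv (convex_Ico _ _) gg_cont
  · rw [interior_Ico]
    intro x hx
    exact (gg_hasDeriv hx.1.le hx.2).differentiableAt.differentiableWithinAt
  · rw [interior_Ico]
    intro a ha b hb hab
    rw [(gg_hasDeriv ha.1.le ha.2).deriv, (gg_hasDeriv hb.1.le hb.2).deriv]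
    have hca : 0 < Real.cos (2*a) := cos2_pos ha.1.le ha.2
    have hcb : 0 < Real.cos (2*b) := cos2_pos hb.1.le hb.2
    have hm : Real.cos (2*b) ≤ Real.cos (2*a) := by
      apply Real.cos_le_cos_of_nonneg_of_le_pi (by linarith [ha.1]) (by nlinarith [Real.pi_pos, hb.2]) (by linarith)
    gcongr

lemma gg_ratio {a s : ℝ} (ha : 0 < a) (has : a ≤ s) (hs : s < π/4) : s * gg a ≤ a * gg s := by
  rcases eq_or_lt_of_le has with rfl|hlt
  · exact le_of_eq (by ring)
  have hs0 : 0 < s := lt_trans ha hlt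
  have h0mem : (0:ℝ) ∈ Ico (0:ℝ) (π/4) := ⟨le_refl _, pi4_pos⟩
  have hsmem : s ∈ Ico (0:ℝ) (π/4) := ⟨hs0.le, hs⟩
  have hc1 : (0:ℝ) ≤ 1 - a/s := by
    rw [sub_nonneg, div_le_one hs0]; exact has
  have hc2 : (0:ℝ) ≤ a/s := by positivity
  have hsum : (1 - a/s) + a/s = 1 := by ring
  have := gg_convex.2 h0mem hsmem hc1 hc2 hsum
  simp only [smul_eq_mul, mul_zero, zero_add, gg_zero] at this
  rw [div_mul_cancel₀ _ hs0.ne'] at this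
  -- this : gg a ≤ (1 - a/s) * 0 + a/s * gg s
  have h3 : gg a ≤ a/s * gg s := by linarith
  calc s * gg a ≤ s * (a/s * gg s) := by
        apply mul_le_mul_of_nonneg_left h3 hs0.le
  _ = a * gg s := by field_simp
lemma psi_eq {θ : ℝ} (hθ : 0 < θ) :
    psi θ = θ⁻¹ * (θ⁻¹ * ∫ s in (0:ℝ)..θ, gg s) := by
  unfold psi
  congr 1
  have h0 : (∫ t in (0:ℝ)..1, Real.log (Real.tan (θ * t + π / 4)))
      = ∫ t in (0:ℝ)..1, gg (θ * t) := rfl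
  rw [h0, intervalIntegral.integral_comp_mul_left gg hθ.ne']
  simp [smul_eq_mul]

lemma psi_bounds {θ : ℝ} (h0 : 0 < θ) (h4 : θ < π/4) :
    1 ≤ psi θ ∧ psi θ ≤ (Real.cos (2*θ))⁻¹ := by
  have hsub : Icc (0:ℝ) θ ⊆ Ico 0 (π/4) := fun x hx => ⟨hx.1, lt_of_le_of_lt hx.2 h4⟩
  have hint : IntervalIntegrable gg MeasureTheory.volume 0 θ :=
    (gg_cont.mono hsub).intervalIntegrable_of_Icc h0.le
  have hcosθ : 0 < Real.cos (2*θ) := cos2_pos h0.le h4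
  have hlow : θ^2 ≤ ∫ s in (0:ℝ)..θ, gg s := by
    have he : ∫ s in (0:ℝ)..θ, 2*s = θ^2 := by
      rw [intervalIntegral.integral_const_mul, integral_id]; ring
    rw [← he]
    apply intervalIntegral.integral_mono_on h0.le
      (by apply Continuous.intervalIntegrable; fun_prop) hint
    intro x hx
    rcases eq_or_lt_of_le hx.1 with h|h
    · rw [← h]; simp [gg_zero]
    · exact (gg_slope h4 h (hx.2)).1
  have hup : (∫ s in (0:ℝ)..θ, gg s) ≤ θ^2 / Real.cos (2*θ) := by
    have he : ∫ s in (0:ℝ)..θ, (2 / Real.cos (2*θ)) * s = θ^2 / Real.cos (2*θ) := by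
      rw [intervalIntegral.integral_const_mul, integral_id]; ring
    rw [← he]
    apply intervalIntegral.integral_mono_on h0.le hint
      (by apply Continuous.intervalIntegrable; fun_prop)
    intro x hx
    rcases eq_or_lt_of_le hx.1 with h|h
    · rw [← h]; simp [gg_zero]
    · exact (gg_slope h4 h (hx.2)).2
  rw [psi_eq h0]
  have hθ2 : (0:ℝ) < θ^2 := by positivity
  have hrw : θ⁻¹ * (θ⁻¹ * ∫ s in (0:ℝ)..θ, gg s) = (∫ s in (0:ℝ)..θ, gg s) / θ^2 := by
    rw [sq]; field_simp
  rw [hrw]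
  constructor
  · rw [le_div_iff₀ hθ2]; linarith
  · rw [div_le_iff₀ hθ2]
    calc (∫ s in (0:ℝ)..θ, gg s) ≤ θ^2 / Real.cos (2*θ) := hup
    _ = (Real.cos (2*θ))⁻¹ * θ^2 := by ring

lemma psi_tendsto : Filter.Tendsto psi (nhdsWithin 0 (Set.Ioi 0)) (nhds 1) := by
  have hmem : Ioo (0:ℝ) (π/4) ∈ nhdsWithin (0:ℝ) (Set.Ioi 0) :=
    Ioo_mem_nhdsGT pi4_pos
  apply tendsto_of_tendsto_of_tendsto_of_le_of_le'
      (tendsto_const_nhds : Filter.Tendsto (fun _ : ℝ => (1:ℝ)) _ _)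
  · -- Tendsto (fun θ => (cos (2θ))⁻¹)
    have hcont : ContinuousAt (fun θ : ℝ => (Real.cos (2*θ))⁻¹) 0 := by
      apply ContinuousAt.inv₀
      · fun_prop
      · simp
    have h1 := hcont.tendsto
    simp only [mul_zero, Real.cos_zero, inv_one] at h1
    exact h1.mono_left nhdsWithin_le_nhds
  · filter_upwards [hmem] with θ hθ
    exact (psi_bounds hθ.1 hθ.2).1
  · filter_upwards [hmem] with θ hθ
    exact (psi_bounds hθ.1 hθ.2).2

lemma log_quad {x : ℝ} (h1 : 1/2 ≤ x) (h2 : x ≤ 1) :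
    Real.log x ≤ (x - 1) - (x - 1)^2/2 := by
  have hx : 0 < x := by linarith
  rw [Real.log_le_iff_le_exp hx]
  obtain ⟨r, hrdef⟩ : ∃ r : ℝ, r = 1 - x := ⟨1 - x, rfl⟩
  obtain ⟨w, hwdef⟩ : ∃ w : ℝ, w = r + r^2/2 := ⟨_, rfl⟩
  have hr0 : 0 ≤ r := by rw [hrdef]; linarith
  have hr2 : r ≤ 1/2 := by rw [hrdef]; linarith
  have hw : (x - 1) - (x - 1)^2/2 = -w := by rw [hwdef, hrdef]; ring
  rw [hw, Real.exp_neg]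
  have hw0 : 0 ≤ w := by rw [hwdef]; positivity
  have hw1 : w ≤ 1 := by rw [hwdef]; nlinarith
  have hb' : Real.exp w ≤ 1 + w + w^2/2 + 2/9*w^3 := by
    calc Real.exp w ≤ _ := Real.exp_bound' hw0 hw1 (n := 3) (by norm_num)
    _ = 1 + w + w^2/2 + 2/9*w^3 := by
        norm_num [Finset.sum_range_succ, Nat.factorial]
        ring
  have hkey : x * (1 + w + w^2/2 + 2/9*w^3) ≤ 1 := by
    have hx1 : x = 1 - r := by rw [hrdef]; ring
    rw [hx1, hwdef]
    nlinarith [pow_nonneg hr0 3, pow_nonneg hr0 4, pow_nonneg hr0 5, pow_nonneg hr0 6,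
      pow_nonneg hr0 7]
  rw [← one_div, le_div_iff₀ (Real.exp_pos w)]
  calc x * Real.exp w ≤ x * (1 + w + w^2/2 + 2/9*w^3) := by
        apply mul_le_mul_of_nonneg_left hb' hx.le
  _ ≤ 1 := hkey

lemma sin_lb {w : ℝ} (h0 : 0 < w) (h4 : w ≤ π/4) :
    w * (1 - (w^2/6 + (5/768)*w^3)) ≤ Real.sin w := by
  obtain ⟨u, hudef⟩ : ∃ u : ℝ, u = w/2 := ⟨_, rfl⟩
  have hu0 : 0 < u := by rw [hudef]; linarith
  have hu1 : u ≤ 1/2 := by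
    rw [hudef]; nlinarith [Real.pi_lt_d2]
  have habs : |u| ≤ 1 := by rw [abs_of_pos hu0]; linarith
  have hs := neg_le_of_abs_le (Real.sin_bound habs)
  have hcb := neg_le_of_abs_le (Real.cos_bound habs)
  rw [abs_of_pos hu0] at hs hcb
  -- sin u ≥ u - u^3/6 - u^4*(5/96) ; cos u ≥ 1 - u^2/2 - u^4*(5/96)
  have hsin_u : u - u^3/6 - u^4*(5/96) ≤ Real.sin u := by
    nlinarith [mul_le_mul_of_nonneg_left hu1 (pow_nonneg hu0.le 4)]
  have hcos_u : 1 - u^2/2 - u^4*(5/96) ≤ Real.cos u := by linarith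
  have hq2 : u^2 ≤ 1/4 := by nlinarith
  have hq3 : u^3 ≤ u/4 := by nlinarith [mul_le_mul_of_nonneg_left hq2 hu0.le]
  have hq4 : u^4 ≤ u/8 := by nlinarith [mul_le_mul_of_nonneg_left hq3 hu0.le]
  have hq4' : u^4 ≤ 1/16 := by nlinarith [sq_nonneg (u^2 - 1/4)]
  have hA : 0 < u - u^3/6 - u^4*(5/96) := by nlinarith
  have hB : 0 < 1 - u^2/2 - u^4*(5/96) := by nlinarith
  have hcosu : 0 ≤ Real.cos u := le_trans hB.le hcos_u
  have hprod : (u - u^3/6 - u^4*(5/96)) * (1 - u^2/2 - u^4*(5/96))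
      ≤ Real.sin u * Real.cos u :=
    mul_le_mul hsin_u hcos_u hB.le (le_trans hA.le hsin_u)
  have hw2u : w = 2*u := by rw [hudef]; ring
  have hsin2 : Real.sin w = 2 * (Real.sin u * Real.cos u) := by
    rw [hw2u, Real.sin_two_mul]; ring
  rw [hsin2, hw2u]
  have hpoly : 2*u * (1 - ((2*u)^2/6 + (5/768)*(2*u)^3))
      ≤ 2 * ((u - u^3/6 - u^4*(5/96)) * (1 - u^2/2 - u^4*(5/96))) := by
    nlinarith [pow_nonneg hu0.le 5, pow_nonneg hu0.le 6, pow_nonneg hu0.le 7,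
      pow_nonneg hu0.le 8]
  linarith

lemma log_sin_lb {w : ℝ} (h0 : 0 < w) (h4 : w ≤ π/4) :
    Real.log w - Real.log (Real.sin w) ≤ (4/21)*w^2 + (5/672)*w^3 := by
  obtain ⟨x, hxdef⟩ : ∃ x : ℝ, x = w^2/6 + (5/768)*w^3 := ⟨_, rfl⟩
  have hwle : w ≤ 0.7854 := by nlinarith [Real.pi_lt_d4]
  have hx0 : 0 < x := by rw [hxdef]; positivity
  have hx8 : x ≤ 1/8 := by rw [hxdef]; nlinarith
  have h1x : (0:ℝ) < 1 - x := by linarith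
  have hsin := sin_lb h0 h4
  rw [← hxdef] at hsin
  have hwx : 0 < w*(1-x) := by positivity
  have hlog1 : Real.log (w*(1-x)) ≤ Real.log (Real.sin w) := Real.log_le_log hwx hsin
  rw [Real.log_mul h0.ne' h1x.ne'] at hlog1
  have hlog2 : -Real.log (1-x) ≤ x/(1-x) := by
    have hl := Real.log_le_sub_one_of_pos (show (0:ℝ) < (1-x)⁻¹ by positivity)
    rw [Real.log_inv] at hl
    have h2 : (1-x)⁻¹ - 1 = x/(1-x) := by field_simp; ring
    linarith
  have hdiv : x/(1-x) ≤ (8/7)*x := by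
    rw [div_le_iff₀ h1x]; nlinarith
  have hexp : (8/7)*x = (4/21)*w^2 + (5/672)*w^3 := by rw [hxdef]; ring
  linarith

noncomputable def bb1 (s : ℝ) : ℝ :=
  2*Real.sin (s + π/4) - 3/2 - (Real.sin (s + π/4))^2/2

noncomputable def bb2 (s : ℝ) : ℝ :=
  -Real.log (π/4 - s) + (4/21)*(π/4 - s)^2 + (5/672)*(π/4 - s)^3

lemma gg_le_bb {s : ℝ} (h0 : 0 ≤ s) (hs : s < π/4) : gg s ≤ bb1 s + bb2 s := by
  have hc := cos_v_pos h0 hs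
  have hsv := sin_v_pos h0 hs
  have hgg : gg s = Real.log (Real.sin (s + π/4)) - Real.log (Real.cos (s + π/4)) := by
    rw [gg, Real.tan_eq_sin_div_cos, Real.log_div hsv.ne' hc.ne']
  have hsin1 : Real.sin (s + π/4) ≤ 1 := Real.sin_le_one _
  have hsing : 0.7 ≤ Real.sin (s + π/4) := sin_v_ge h0 hs.le
  have h1 : Real.log (Real.sin (s + π/4)) ≤ bb1 s := by
    have hq := log_quad (x := Real.sin (s + π/4)) (by linarith) hsin1
    have he : (Real.sin (s + π/4) - 1) - (Real.sin (s + π/4) - 1)^2/2 = bb1 s := by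
      rw [bb1]; ring
    linarith
  have hcs : Real.cos (s + π/4) = Real.sin (π/4 - s) := by
    rw [← Real.sin_pi_div_two_sub]
    congr 1
    ring
  have h2 : -Real.log (Real.cos (s + π/4)) ≤ bb2 s := by
    rw [hcs, bb2]
    have hls := log_sin_lb (w := π/4 - s) (by linarith) (by linarith)
    have hlw : Real.log (π/4 - s) ≤ 0 := by
      apply Real.log_nonpos (by linarith)
      linarith [pi4_lt_one]
    linarith
  linarith

lemma bb1_ge {s : ℝ} (h0 : 0 ≤ s) (hs : s ≤ π/4) : -(1/2) ≤ bb1 s := by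
  have hsin1 : Real.sin (s + π/4) ≤ 1 := Real.sin_le_one _
  have hsing : 0.7 ≤ Real.sin (s + π/4) := sin_v_ge h0 hs
  rw [bb1]
  nlinarith
noncomputable def FF (v : ℝ) : ℝ :=
  -2*Real.cos v - (7/4)*v + (1/4)*(Real.sin v * Real.cos v)

lemma FF_deriv (x : ℝ) :
    HasDerivAt FF (2*Real.sin x - 3/2 - (Real.sin x)^2/2) x := by
  have hc := Real.hasDerivAt_cos x
  have hs := Real.hasDerivAt_sin x
  have h1 : HasDerivAt (fun v : ℝ => -2*Real.cos v) ((-2)*(-Real.sin x)) x :=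
    hc.const_mul (-2)
  have h2 : HasDerivAt (fun v : ℝ => (7/4)*v) ((7/4)*1) x :=
    (hasDerivAt_id x).const_mul (7/4)
  have h3 : HasDerivAt (fun v : ℝ => Real.sin v * Real.cos v)
      (Real.cos x * Real.cos x + Real.sin x * (-Real.sin x)) x := hs.mul hc
  have h4 : HasDerivAt FF ((-2)*(-Real.sin x) - (7/4)*1
      + (1/4)*(Real.cos x * Real.cos x + Real.sin x * (-Real.sin x))) x :=
    (h1.sub h2).add (h3.const_mul (1/4))
  convert h4 using 1
  linear_combination (-(1/4:ℝ)) * Real.sin_sq_add_cos_sq x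

lemma bb1_cont : Continuous bb1 := by
  unfold bb1; fun_prop

lemma int_bb1 : ∫ s in (0:ℝ)..(π/4), bb1 s = Real.sqrt 2 - 7*π/16 - 1/8 := by
  have h1 : ∫ s in (0:ℝ)..(π/4), bb1 s
      = ∫ v in (0 + π/4 : ℝ)..(π/4 + π/4), (2*Real.sin v - 3/2 - (Real.sin v)^2/2) := by
    rw [← intervalIntegral.integral_comp_add_right
      (fun v => 2*Real.sin v - 3/2 - (Real.sin v)^2/2) (π/4)]
    rfl
  rw [h1]
  have h2 : (0 + π/4 : ℝ) = π/4 := by ring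
  have h3 : (π/4 + π/4 : ℝ) = π/2 := by ring
  rw [h2, h3]
  rw [intervalIntegral.integral_eq_sub_of_hasDerivAt (f := FF) (fun x _ => FF_deriv x)
      (by apply Continuous.intervalIntegrable; fun_prop)]
  unfold FF
  rw [Real.cos_pi_div_two, Real.sin_pi_div_two, Real.cos_pi_div_four, Real.sin_pi_div_four]
  have h2s : Real.sqrt 2 ^ 2 = 2 := Real.sq_sqrt (by norm_num)
  linear_combination (-(1/16:ℝ)) * h2s

lemma int_bb1_bound {t : ℝ} (h0 : 0 ≤ t) (ht : t ≤ π/4) :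
    ∫ s in (0:ℝ)..t, bb1 s ≤ Real.sqrt 2 - 7*π/16 - 1/8 + (1/2)*(π/4 - t) := by
  have hsplit : (∫ s in (0:ℝ)..t, bb1 s) + ∫ s in t..(π/4), bb1 s
      = ∫ s in (0:ℝ)..(π/4), bb1 s :=
    intervalIntegral.integral_add_adjacent_intervals
      (bb1_cont.intervalIntegrable _ _) (bb1_cont.intervalIntegrable _ _)
  have htail : -(1/2)*(π/4 - t) ≤ ∫ s in t..(π/4), bb1 s := by
    have hconst : ∫ s in t..(π/4), (-(1/2) : ℝ) = -(1/2)*(π/4 - t) := by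
      simp; ring
    rw [← hconst]
    apply intervalIntegral.integral_mono_on ht intervalIntegrable_const
      (bb1_cont.intervalIntegrable _ _)
    intro x hx
    exact bb1_ge (le_trans h0 hx.1) hx.2
  linarith [int_bb1]
lemma int_bb2_bound {t : ℝ} (h0 : 0 ≤ t) (ht : t < π/4) :
    ∫ s in (0:ℝ)..t, bb2 s
      ≤ (π/4)*(1 - Real.log (π/4)) + (4/63)*(π/4)^3 + (5/2688)*(π/4)^4 := by
  obtain ⟨d, hddef⟩ : ∃ d : ℝ, d = π/4 - t := ⟨_, rfl⟩
  have hd0 : 0 < d := by rw [hddef]; linarith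
  have hd4 : d ≤ π/4 := by rw [hddef]; linarith
  have hd1 : d ≤ 1 := le_trans hd4 pi4_lt_one.le
  have h1 : ∫ s in (0:ℝ)..t, bb2 s
      = ∫ u in (π/4 - t)..(π/4 - 0), (-Real.log u + (4/21)*u^2 + (5/672)*u^3) := by
    rw [← intervalIntegral.integral_comp_sub_left
      (fun u => -Real.log u + (4/21)*u^2 + (5/672)*u^3) (π/4)]
    rfl
  have e0 : (π/4 - 0 : ℝ) = π/4 := by ring
  rw [h1, e0, ← hddef]
  have hnot : (0:ℝ) ∉ Set.uIcc d (π/4) := by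
    rw [Set.uIcc_of_le hd4]
    exact fun hmem => absurd hmem.1 (by linarith)
  have hil : IntervalIntegrable Real.log MeasureTheory.volume d (π/4) :=
    intervalIntegrable_log hnot
  have hi2 : IntervalIntegrable (fun u : ℝ => (4/21)*u^2 + (5/672)*u^3)
      MeasureTheory.volume d (π/4) := by
    apply Continuous.intervalIntegrable; fun_prop
  have hil2 : IntervalIntegrable (fun u : ℝ => -Real.log u) MeasureTheory.volume d (π/4) :=
    hil.neg
  have hsplit : ∫ u in d..(π/4), (-Real.log u + (4/21)*u^2 + (5/672)*u^3)
      = (∫ u in d..(π/4), -Real.log u)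
        + ∫ u in d..(π/4), ((4/21)*u^2 + (5/672)*u^3) := by
    simp_rw [add_assoc]
    exact intervalIntegral.integral_add hil2 hi2
  have hlogval : ∫ u in d..(π/4), -Real.log u
      = -(π/4*Real.log (π/4) - d*Real.log d - π/4 + d) := by
    rw [intervalIntegral.integral_neg, integral_log]
  have hpoly : ∫ u in d..(π/4), ((4/21)*u^2 + (5/672)*u^3)
      = (4/21)*(((π/4)^3 - d^3)/3) + (5/672)*(((π/4)^4 - d^4)/4) := by
    rw [intervalIntegral.integral_add (by apply Continuous.intervalIntegrable; fun_prop)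
      (by apply Continuous.intervalIntegrable; fun_prop),
      intervalIntegral.integral_const_mul, intervalIntegral.integral_const_mul,
      integral_pow, integral_pow]
    norm_num
  rw [hsplit, hlogval, hpoly]
  have hdlog : d * Real.log d ≤ 0 :=
    mul_nonpos_of_nonneg_of_nonpos hd0.le (Real.log_nonpos hd0.le hd1)
  have hd3 : (0:ℝ) ≤ d^3 := by positivity
  have hd4' : (0:ℝ) ≤ d^4 := by positivity
  nlinarith
lemma sqrt2_ub : Real.sqrt 2 ≤ 1.4142136 := by
  nlinarith [Real.sq_sqrt (show (0:ℝ) ≤ 2 by norm_num), Real.sqrt_nonneg 2]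

lemma log_pi4 : -(0.2421:ℝ) ≤ Real.log (π/4) := by
  have hpi : (3.14159265:ℝ) < π := lt_trans (by norm_num) Real.pi_gt_d20
  have h2 : Real.log (4/π) ≤ 0.2421 := by
    rw [Real.log_le_iff_le_exp (by positivity)]
    have h4 : (1:ℝ) + 0.2421/64 ≤ Real.exp (0.2421/64) := by
      have := Real.add_one_le_exp ((0.2421:ℝ)/64); linarith
    have h3 : ((1:ℝ) + 0.2421/64)^(64:ℕ) ≤ Real.exp 0.2421 := by
      calc ((1:ℝ) + 0.2421/64)^(64:ℕ) ≤ (Real.exp (0.2421/64))^(64:ℕ) :=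
        pow_le_pow_left₀ (by norm_num) h4 64
      _ = Real.exp 0.2421 := by
        rw [← Real.exp_nat_mul]; norm_num
    have h6 : (4:ℝ)/π ≤ 4/3.14159265 := by
      rw [div_le_div_iff₀ Real.pi_pos (by norm_num)]
      nlinarith [hpi]
    have h7 : (4:ℝ)/3.14159265 ≤ ((1:ℝ) + 0.2421/64)^(64:ℕ) := by
      set_option maxHeartbeats 2000000 in norm_num
    linarith
  have h8 : Real.log (4/π) = -Real.log (π/4) := by
    rw [show (4:ℝ)/π = (π/4)⁻¹ from (inv_div π 4).symm, Real.log_inv]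
  linarith

lemma partB {θ : ℝ} (hθ : θ ∈ Ioo 0 (π/4)) : psi θ ≤ 3/2 := by
  obtain ⟨h0, h4⟩ := hθ
  have key : (∫ s in (0:ℝ)..θ, gg s) ≤ 3/2*θ^2 := by
    have hsub : Icc (0:ℝ) θ ⊆ Ico 0 (π/4) := fun x hx => ⟨hx.1, lt_of_le_of_lt hx.2 h4⟩
    have hI1 : IntervalIntegrable gg MeasureTheory.volume 0 θ :=
      (gg_cont.mono hsub).intervalIntegrable_of_Icc h0.le
    rcases le_or_gt (gg θ) (3*θ) with hcase|hcase
    · -- easy case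
      have he : ∫ s in (0:ℝ)..θ, 3*s = 3/2*θ^2 := by
        rw [intervalIntegral.integral_const_mul, integral_id]; ring
      rw [← he]
      apply intervalIntegral.integral_mono_on h0.le hI1
        (by apply Continuous.intervalIntegrable; fun_prop)
      intro s hs
      rcases eq_or_lt_of_le hs.1 with h|h
      · rw [← h]; simp [gg_zero]
      · have hr := gg_ratio h hs.2 h4
        nlinarith [mul_le_mul_of_nonneg_left hcase h.le]
    · -- hard case
      obtain ⟨d, hddef⟩ : ∃ d : ℝ, d = min ((π/4 - θ)/2) (1/1000) := ⟨_, rfl⟩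
      have hd0 : 0 < d := by
        rw [hddef]; apply lt_min (by linarith) (by norm_num)
      have hdsmall : d ≤ 1/1000 := by rw [hddef]; exact min_le_right _ _
      have hdθ : d ≤ (π/4 - θ)/2 := by rw [hddef]; exact min_le_left _ _
      obtain ⟨t, htdef⟩ : ∃ t : ℝ, t = π/4 - d := ⟨_, rfl⟩
      have hθt : θ < t := by rw [htdef]; linarith
      have ht4 : t < π/4 := by rw [htdef]; linarith
      have ht0 : 0 < t := by linarith
      have hsub2 : Icc (0:ℝ) t ⊆ Ico 0 (π/4) := fun x hx => ⟨hx.1, lt_of_le_of_lt hx.2 ht4⟩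
      have hI3 : IntervalIntegrable gg MeasureTheory.volume 0 t :=
        (gg_cont.mono hsub2).intervalIntegrable_of_Icc ht0.le
      have hI2 : IntervalIntegrable gg MeasureTheory.volume θ t :=
        ((gg_cont.mono hsub2).mono (Icc_subset_Icc h0.le le_rfl)).intervalIntegrable_of_Icc hθt.le
      have hsplit : (∫ s in (0:ℝ)..θ, gg s) + (∫ s in θ..t, gg s) = ∫ s in (0:ℝ)..t, gg s :=
        intervalIntegral.integral_add_adjacent_intervals hI1 hI2
      have hmid : 3/2*(t^2 - θ^2) ≤ ∫ s in θ..t, gg s := by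
        have he : ∫ s in θ..t, 3*s = 3/2*(t^2 - θ^2) := by
          rw [intervalIntegral.integral_const_mul, integral_id]; ring
        rw [← he]
        apply intervalIntegral.integral_mono_on hθt.le
          (by apply Continuous.intervalIntegrable; fun_prop) hI2
        intro s hs
        have hs0 : 0 < s := lt_of_lt_of_le h0 hs.1
        have hr := gg_ratio h0 hs.1 (lt_of_le_of_lt hs.2 ht4)
        nlinarith [mul_le_mul_of_nonneg_left hcase.le hs0.le]
      have hbb2cont : ContinuousOn bb2 (Icc 0 t) := by
        unfold bb2
        apply ContinuousOn.add
        apply ContinuousOn.add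
        · apply ContinuousOn.neg
          apply ContinuousOn.log
          · fun_prop
          · intro x hx
            have : x ≤ t := hx.2
            nlinarith [ht4]
        · fun_prop
        · fun_prop
      have hIb2 : IntervalIntegrable bb2 MeasureTheory.volume 0 t :=
        hbb2cont.intervalIntegrable_of_Icc ht0.le
      have hIb1 : IntervalIntegrable bb1 MeasureTheory.volume 0 t :=
        bb1_cont.intervalIntegrable _ _
      have hup : (∫ s in (0:ℝ)..t, gg s)
          ≤ (∫ s in (0:ℝ)..t, bb1 s) + ∫ s in (0:ℝ)..t, bb2 s := by
        rw [← intervalIntegral.integral_add hIb1 hIb2]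
        apply intervalIntegral.integral_mono_on ht0.le hI3 (hIb1.add hIb2)
        intro s hs
        exact gg_le_bb hs.1 (lt_of_le_of_lt hs.2 ht4)
      have hb1 := int_bb1_bound ht0.le ht4.le
      have hb2 := int_bb2_bound ht0.le ht4
      -- numeric conclusion
      have hπl : (3.14159265:ℝ) < π := lt_trans (by norm_num) Real.pi_gt_d20
      have hπu : π < 3.14159266 := lt_trans Real.pi_lt_d20 (by norm_num)
      have hlog := log_pi4
      have hlog0 : Real.log (π/4) ≤ 0 :=
        Real.log_nonpos (by positivity) (by linarith [pi4_lt_one])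
      have hs2 := sqrt2_ub
      have hq : π/4 ≤ 0.7853981650 := by linarith
      have hq0 : (0:ℝ) ≤ π/4 := by positivity
      have t1 : (π/4)*(1 - Real.log (π/4)) ≤ 0.9755430608 := by
        have := mul_le_mul hq (show 1 - Real.log (π/4) ≤ 1.2421 by linarith)
          (by linarith) (by norm_num)
        calc (π/4)*(1 - Real.log (π/4)) ≤ 0.7853981650 * 1.2421 := this
        _ ≤ 0.9755430608 := by norm_num
      have t2 : (π/4)^3 ≤ 0.4844732718 := by
        calc (π/4)^3 ≤ 0.7853981650^3 := pow_le_pow_left₀ hq0 hq 3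
        _ ≤ 0.4844732718 := by norm_num
      have t3 : (π/4)^4 ≤ 0.3805042650 := by
        calc (π/4)^4 ≤ 0.7853981650^4 := pow_le_pow_left₀ hq0 hq 4
        _ ≤ 0.3805042650 := by norm_num
      have ht2 : (π/4)^2 - 2*(π/4)*d ≤ t^2 := by
        rw [htdef]; nlinarith [sq_nonneg d]
      have hql : (0.78539816:ℝ) ≤ π/4 := by linarith
      have hqd : 2*(π/4)*d ≤ 2*0.7853981650*(1/1000) := by
        apply mul_le_mul (by linarith) hdsmall hd0.le (by norm_num)
      have hq2 : (0.6168502658:ℝ) ≤ (π/4)^2 := by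
        calc (0.6168502658:ℝ) ≤ 0.78539816^2 := by norm_num
        _ ≤ (π/4)^2 := pow_le_pow_left₀ (by norm_num) hql 2
      have e4 : π/4 - t = d := by rw [htdef]; ring
      have hVnum : (∫ s in (0:ℝ)..t, bb1 s) + (∫ s in (0:ℝ)..t, bb2 s) ≤ 3/2*t^2 := by
        rw [e4] at hb1
        linarith [hb1, hb2, t1, t2, t3, ht2, hq2, hs2, hπl, hqd, hdsmall]
      linarith only [hsplit, hmid, hup, hVnum]
  -- conclude
  rw [psi_eq h0]
  have hθ2 : (0:ℝ) < θ^2 := by positivity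
  have hrw : θ⁻¹ * (θ⁻¹ * ∫ s in (0:ℝ)..θ, gg s) = (∫ s in (0:ℝ)..θ, gg s) / θ^2 := by
    rw [sq]; field_simp
  rw [hrw, div_le_iff₀ hθ2]
  linarith

end PsiAux

theorem stmt_2 :
    Filter.Tendsto psi (nhdsWithin 0 (Set.Ioi 0)) (nhds 1) ∧
      ∀ θ ∈ Set.Ioo (0:ℝ) (π / 4), psi θ ≤ 3 / 2 := by
  exact ⟨PsiAux.psi_tendsto, fun θ hθ => PsiAux.partB hθ⟩
end

section
/- Let Σ be a d×d symmetric matrix with orthonormal eigenvectors u₁,...,u_d and eigenvalues λ₁ ≥ ... ≥ λ_d. Let U ∈ ℝ^{d×k} have columns u₁,...,u_k and U⊥ ∈ ℝ^{d×(d-k)} have columns u_{k+1},...,u_d. Let E_{ij} ∈ ℝ^{(d-k)×k} be the matrix with a 1 in position (i,j) and zeros elsewhere, and Δ_{ij} := U⊥·E_{ij}. Then Δ_{ij}·UᵀΣU - (I_d - UUᵀ)·Σ·Δ_{ij} = (λ_j - λ_{k+i})·Δ_{ij}. -/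
open Matrix

theorem stmt_6 (d k : ℕ) (hk : k ≤ d) (S : Matrix (Fin d) (Fin d) ℝ) (hS : S.IsSymm)
    (u : Fin d → Fin d → ℝ) (lam : Fin d → ℝ) (hmono : Antitone lam)
    (horth : ∀ a b, u a ⬝ᵥ u b = if a = b then (1:ℝ) else 0)
    (heig : ∀ m, S.mulVec (u m) = lam m • u m)
    (i : Fin (d - k)) (j : Fin k)
    (U : Matrix (Fin d) (Fin k) ℝ) (hU : U = Matrix.of fun a b => u (Fin.castLE hk b) a)
    (Uperp : Matrix (Fin d) (Fin (d - k)) ℝ)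
    (hUperp : Uperp = Matrix.of fun a (b : Fin (d - k)) => u ⟨k + b.1, by omega⟩ a) :
    (Uperp * Matrix.single i j (1:ℝ)) * (Uᵀ * S * U) -
        (1 - U * Uᵀ) * S * (Uperp * Matrix.single i j (1:ℝ)) =
      (lam (Fin.castLE hk j) - lam ⟨k + i.1, by omega⟩) •
        (Uperp * Matrix.single i j (1:ℝ)) := by
  set lamU : Fin k → ℝ := fun p => lam (Fin.castLE hk p) with hlamU
  set lamP : Fin (d - k) → ℝ := fun b => lam ⟨k + b.1, by omega⟩ with hlamP
  have hdot : ∀ a b : Fin d, (∑ x, u a x * u b x) = if a = b then (1:ℝ) else 0 := by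
    intro a b
    have := horth a b
    simpa [dotProduct] using this
  have hSU : S * U = U * Matrix.diagonal lamU := by
    ext a p
    have h := congrFun (heig (Fin.castLE hk p)) a
    simp only [Matrix.mulVec, dotProduct, Pi.smul_apply, smul_eq_mul] at h
    rw [Matrix.mul_apply, Matrix.mul_diagonal]
    simp only [hU, Matrix.of_apply, hlamU]
    rw [h]; ring
  have hSUp : S * Uperp = Uperp * Matrix.diagonal lamP := by
    ext a b
    have h := congrFun (heig ⟨k + b.1, by omega⟩) a
    simp only [Matrix.mulVec, dotProduct, Pi.smul_apply, smul_eq_mul] at h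
    rw [Matrix.mul_apply, Matrix.mul_diagonal]
    simp only [hUperp, Matrix.of_apply, hlamP]
    rw [h]; ring
  have hUtU : Uᵀ * U = 1 := by
    ext p q
    rw [Matrix.mul_apply, Matrix.one_apply]
    simp only [hU, Matrix.transpose_apply, Matrix.of_apply]
    rw [hdot]
    simp [Fin.ext_iff]
  have hUtUp : Uᵀ * Uperp = 0 := by
    ext p b
    rw [Matrix.mul_apply]
    simp only [hU, hUperp, Matrix.transpose_apply, Matrix.of_apply]
    rw [hdot]
    have : (Fin.castLE hk p : Fin d) ≠ ⟨k + b.1, by omega⟩ := by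
      simp [Fin.ext_iff]
      omega
    simp [this]
  have h1 : Uᵀ * S * U = Matrix.diagonal lamU := by
    rw [Matrix.mul_assoc, hSU, ← Matrix.mul_assoc, hUtU, Matrix.one_mul]
  have h2 : (1 - U * Uᵀ) * S * Uperp = Uperp * Matrix.diagonal lamP := by
    rw [Matrix.sub_mul, Matrix.sub_mul, Matrix.one_mul, hSUp,
      Matrix.mul_assoc (U * Uᵀ), hSUp, Matrix.mul_assoc U, ← Matrix.mul_assoc Uᵀ,
      hUtUp, Matrix.zero_mul, Matrix.mul_zero, sub_zero]
  have h2' : (1 - U * Uᵀ) * S * (Uperp * Matrix.single i j (1:ℝ)) =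
      Uperp * Matrix.diagonal lamP * Matrix.single i j (1:ℝ) := by
    rw [← Matrix.mul_assoc, h2]
  have e1 : Matrix.single i j (1:ℝ) * Matrix.diagonal lamU =
      lamU j • Matrix.single i j (1:ℝ) := by
    ext a b
    by_cases hb : b = j
    · subst hb
      simp [Matrix.mul_diagonal, Matrix.single, mul_comm]
    · simp [Matrix.mul_diagonal, Matrix.single, Ne.symm hb]
  have e2 : Matrix.diagonal lamP * Matrix.single i j (1:ℝ) =
      lamP i • Matrix.single i j (1:ℝ) := by
    ext a b
    by_cases ha : a = i
    · subst ha
      simp [Matrix.diagonal_mul, Matrix.single, mul_comm]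
    · simp [Matrix.diagonal_mul, Matrix.single, Ne.symm ha]
  rw [h1, h2', Matrix.mul_assoc Uperp, e1, Matrix.mul_assoc Uperp, e2,
    Matrix.mul_smul, Matrix.mul_smul, ← sub_smul]
end

section
/- Let Σ have eigenvalues λ₁ ≥ ... ≥ λ_d with λ_k > λ_{k+1}. Then every eigenvalue of the linear map Δ ↦ Δ·UᵀΣU - (I - UUᵀ)·Σ·Δ on the horizontal space {Δ ∈ ℝ^{d×k} : UᵀΔ = 0} is at least λ_k - λ_{k+1} > 0; in particular the map is positive definite with respect to the Frobenius inner product. -/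
open Matrix

theorem stmt_7 (d k : ℕ) (hk0 : 0 < k) (hk : k < d)
    (S : Matrix (Fin d) (Fin d) ℝ) (hS : S.IsSymm)
    (u : Fin d → Fin d → ℝ) (lam : Fin d → ℝ) (hmono : Antitone lam)
    (horth : ∀ a b, u a ⬝ᵥ u b = if a = b then (1:ℝ) else 0)
    (heig : ∀ m, S.mulVec (u m) = lam m • u m)
    (hgap : lam ⟨k, hk⟩ < lam ⟨k - 1, by omega⟩)
    (U : Matrix (Fin d) (Fin k) ℝ)
    (hU : U = Matrix.of fun a b => u (Fin.castLE hk.le b) a)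
    (Δ : Matrix (Fin d) (Fin k) ℝ) (hΔ : Uᵀ * Δ = 0) :
    (lam ⟨k - 1, by omega⟩ - lam ⟨k, hk⟩) * (Δᵀ * Δ).trace ≤
        (Δᵀ * (Δ * (Uᵀ * S * U) - (1 - U * Uᵀ) * S * Δ)).trace ∧
      (Δ ≠ 0 → 0 < (Δᵀ * (Δ * (Uᵀ * S * U) - (1 - U * Uᵀ) * S * Δ)).trace) := by
  classical
  set g : ℝ := lam ⟨k - 1, by omega⟩ - lam ⟨k, hk⟩ with hgdef
  have hgpos : 0 < g := sub_pos.mpr hgap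
  set P : Matrix (Fin d) (Fin d) ℝ := Matrix.of u with hP
  have hPPt : P * Pᵀ = 1 := by
    ext a b
    have := horth a b
    simpa [hP, Matrix.mul_apply, Matrix.one_apply, dotProduct] using this
  have hPtP : Pᵀ * P = 1 := mul_eq_one_comm.mp hPPt
  set C : Matrix (Fin d) (Fin k) ℝ := P * Δ with hC
  have hΔC : Δ = Pᵀ * C := by
    rw [hC, ← Matrix.mul_assoc, hPtP, Matrix.one_mul]
  have hSP : S * Pᵀ = Pᵀ * Matrix.diagonal lam := by
    ext a m
    have h1 := congrFun (heig m) a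
    simp only [Matrix.mulVec, dotProduct, Pi.smul_apply, smul_eq_mul] at h1
    rw [Matrix.mul_diagonal]
    simp only [Matrix.mul_apply, Matrix.transpose_apply, hP, Matrix.of_apply]
    rw [h1]; ring
  have hPSPt : P * S * Pᵀ = Matrix.diagonal lam := by
    rw [Matrix.mul_assoc, hSP, ← Matrix.mul_assoc, hPPt, Matrix.one_mul]
  -- C vanishes on rows < k
  have hC0 : ∀ (m : Fin d) (b : Fin k), (m : ℕ) < k → C m b = 0 := by
    intro m b hm
    have := congrFun (congrFun hΔ ⟨(m : ℕ), hm⟩) b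
    simp only [Matrix.mul_apply, Matrix.transpose_apply, Matrix.zero_apply, hU,
      Matrix.of_apply] at this
    have hcast : (Fin.castLE hk.le (⟨(m : ℕ), hm⟩ : Fin k)) = m := by
      ext; rfl
    rw [hcast] at this
    simpa [hC, hP, Matrix.mul_apply] using this
  -- U^T S U is diagonal
  have hUSU : Uᵀ * S * U =
      Matrix.diagonal (fun b : Fin k => lam (Fin.castLE hk.le b)) := by
    ext b b'
    have h1 : ∀ a, (∑ c, S a c * u (Fin.castLE hk.le b') c)
        = lam (Fin.castLE hk.le b') * u (Fin.castLE hk.le b') a := by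
      intro a
      have h2 := congrFun (heig (Fin.castLE hk.le b')) a
      simpa only [Matrix.mulVec, dotProduct, Pi.smul_apply, smul_eq_mul] using h2
    have h3 := horth (Fin.castLE hk.le b) (Fin.castLE hk.le b')
    have hbq : (Fin.castLE hk.le b = Fin.castLE hk.le b') ↔ (b = b') := by
      constructor
      · intro h; exact Fin.ext (by simpa using congrArg Fin.val h)
      · intro h; rw [h]
    rw [Matrix.mul_assoc]
    simp only [Matrix.mul_apply, Matrix.transpose_apply, hU, Matrix.of_apply]
    simp only [h1]
    simp only [dotProduct] at h3
    rw [show (∑ a, u (Fin.castLE hk.le b) a *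
        (lam (Fin.castLE hk.le b') * u (Fin.castLE hk.le b') a)) =
        lam (Fin.castLE hk.le b') *
          (∑ a, u (Fin.castLE hk.le b) a * u (Fin.castLE hk.le b') a) by
      rw [Finset.mul_sum]; apply Finset.sum_congr rfl; intro a _; ring]
    rw [h3]
    by_cases h : b = b'
    · subst h; simp [Matrix.diagonal_apply]
    · rw [if_neg (fun hh => h (hbq.mp hh)), Matrix.diagonal_apply_ne _ h, mul_zero]
  -- Δᵀ kills the projector part
  have hΔtU : Δᵀ * U = 0 := by
    have := congrArg Matrix.transpose hΔ
    simpa [Matrix.transpose_mul] using this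
  have hterm2 : Δᵀ * ((1 - U * Uᵀ) * S * Δ) =
      Cᵀ * (Matrix.diagonal lam * C) := by
    have h1 : Δᵀ * ((1 - U * Uᵀ) * S * Δ) = Δᵀ * S * Δ := by
      rw [Matrix.mul_assoc (1 - U * Uᵀ) S Δ, ← Matrix.mul_assoc Δᵀ (1 - U * Uᵀ) (S * Δ)]
      have : Δᵀ * (1 - U * Uᵀ) = Δᵀ := by
        rw [Matrix.mul_sub, Matrix.mul_one, ← Matrix.mul_assoc, hΔtU,
          Matrix.zero_mul, sub_zero]
      rw [this, Matrix.mul_assoc]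
    rw [h1, hΔC]
    rw [Matrix.transpose_mul, Matrix.transpose_transpose]
    calc Cᵀ * P * S * (Pᵀ * C) = Cᵀ * (P * S * Pᵀ) * C := by
          simp only [Matrix.mul_assoc]
      _ = Cᵀ * (Matrix.diagonal lam * C) := by rw [hPSPt, Matrix.mul_assoc]
  have hΔtΔ : Δᵀ * Δ = Cᵀ * C := by
    rw [hΔC, Matrix.transpose_mul, Matrix.transpose_transpose]
    calc Cᵀ * P * (Pᵀ * C) = Cᵀ * (P * Pᵀ) * C := by simp only [Matrix.mul_assoc]
      _ = Cᵀ * C := by rw [hPPt, Matrix.mul_one]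
  -- the main trace identity
  have htr : (Δᵀ * (Δ * (Uᵀ * S * U) - (1 - U * Uᵀ) * S * Δ)).trace =
      ∑ b : Fin k, ∑ m : Fin d,
        (lam (Fin.castLE hk.le b) - lam m) * (C m b) ^ 2 := by
    rw [Matrix.mul_sub, Matrix.trace_sub, ← Matrix.mul_assoc, hΔtΔ, hUSU, hterm2]
    rw [Matrix.trace, Matrix.trace]
    rw [← Finset.sum_sub_distrib]
    apply Finset.sum_congr rfl
    intro b _
    simp only [Matrix.diag_apply, Matrix.mul_apply, Matrix.transpose_apply,
      Matrix.diagonal_apply, ite_mul, mul_ite, mul_zero, zero_mul,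
      Finset.sum_ite_eq, Finset.sum_ite_eq', Finset.mem_univ, if_true]
    rw [Finset.sum_mul, ← Finset.sum_sub_distrib]
    apply Finset.sum_congr rfl
    intro m _
    ring
  have htr0 : (Δᵀ * Δ).trace = ∑ b : Fin k, ∑ m : Fin d, (C m b) ^ 2 := by
    rw [hΔtΔ, Matrix.trace]
    apply Finset.sum_congr rfl
    intro b _
    simp only [Matrix.diag_apply, Matrix.mul_apply, Matrix.transpose_apply]
    apply Finset.sum_congr rfl
    intro m _
    ring
  -- termwise bound
  have hbound : ∀ (b : Fin k) (m : Fin d),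
      g * (C m b) ^ 2 ≤ (lam (Fin.castLE hk.le b) - lam m) * (C m b) ^ 2 := by
    intro b m
    by_cases hm : (m : ℕ) < k
    · rw [hC0 m b hm]; simp
    · push_neg at hm
      apply mul_le_mul_of_nonneg_right _ (sq_nonneg _)
      have h1 : lam (⟨k - 1, by omega⟩ : Fin d) ≤ lam (Fin.castLE hk.le b) := by
        apply hmono
        have : (b : ℕ) ≤ k - 1 := by omega
        exact this
      have h2 : lam m ≤ lam (⟨k, hk⟩ : Fin d) := by
        apply hmono
        exact hm
      rw [hgdef]
      linarith
  have hmain : g * (Δᵀ * Δ).trace ≤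
      (Δᵀ * (Δ * (Uᵀ * S * U) - (1 - U * Uᵀ) * S * Δ)).trace := by
    rw [htr, htr0, Finset.mul_sum]
    apply Finset.sum_le_sum
    intro b _
    rw [Finset.mul_sum]
    exact Finset.sum_le_sum fun m _ => hbound b m
  refine ⟨hmain, ?_⟩
  intro hΔne
  have hCne : C ≠ 0 := by
    intro h
    apply hΔne
    rw [hΔC, h, Matrix.mul_zero]
  have hpos : 0 < (Δᵀ * Δ).trace := by
    rw [htr0]
    obtain ⟨m, b, hmb⟩ : ∃ m b, C m b ≠ 0 := by
      by_contra h
      push_neg at h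
      exact hCne (by ext m b; exact h m b)
    have h1 : 0 < (C m b) ^ 2 := by positivity
    have h2 : (C m b) ^ 2 ≤ ∑ b' : Fin k, ∑ m' : Fin d, (C m' b') ^ 2 := by
      calc (C m b) ^ 2 ≤ ∑ m' : Fin d, (C m' b) ^ 2 :=
            Finset.single_le_sum (fun i _ => sq_nonneg (C i b)) (Finset.mem_univ m)
        _ ≤ ∑ b' : Fin k, ∑ m' : Fin d, (C m' b') ^ 2 :=
            Finset.single_le_sum
              (fun i _ => Finset.sum_nonneg fun j _ => sq_nonneg (C j i))
              (Finset.mem_univ b)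
    linarith
  calc (0:ℝ) < g * (Δᵀ * Δ).trace := mul_pos hgpos hpos
    _ ≤ _ := hmain
end

section
/- Let S be a k×k diagonal matrix with diagonal entries s_j ∈ [0, π/4), t ∈ [0,1], and let B be a k×k symmetric positive semidefinite matrix. Then |tr(S³·sin(2tS)·B)| ≤ ‖S·tan(2tS)‖_op · tr(S²·cos(2tS)·B). -/
open Matrix Real

theorem stmt_17 (k : ℕ) (s : Fin k → ℝ) (hs : ∀ j, s j ∈ Set.Ico (0:ℝ) (π / 4))
    (t : ℝ) (ht : t ∈ Set.Icc (0:ℝ) 1)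
    (B : Matrix (Fin k) (Fin k) ℝ) (hB : B.PosSemidef) :
    |((Matrix.diagonal fun j => s j ^ 3 * Real.sin (2 * t * s j)) * B).trace| ≤
      (⨆ j, s j * Real.tan (2 * t * s j)) *
        ((Matrix.diagonal fun j => s j ^ 2 * Real.cos (2 * t * s j)) * B).trace := by
  have hπ := Real.pi_pos
  have h2ts : ∀ j, 0 ≤ 2 * t * s j ∧ 2 * t * s j < π / 2 := by
    intro j
    obtain ⟨hs0, hs1⟩ := hs j
    obtain ⟨ht0, ht1⟩ := ht
    refine ⟨by positivity, ?_⟩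
    nlinarith
  have htr : ∀ d : Fin k → ℝ, ((Matrix.diagonal d) * B).trace = ∑ j, d j * B j j := by
    intro d
    simp [Matrix.trace, Matrix.diag, Matrix.mul_apply, Matrix.diagonal_apply,
      Finset.sum_ite_eq]
  rw [htr, htr]
  have hBnn : ∀ j, 0 ≤ B j j := by
    intro j
    have := hB.dotProduct_mulVec_nonneg (Pi.single j 1)
    simpa [dotProduct, Matrix.mulVec, Pi.single_apply, Finset.sum_ite_eq] using this
  have key : ∀ j, |s j ^ 3 * Real.sin (2 * t * s j) * B j j| ≤
      (⨆ j, s j * Real.tan (2 * t * s j)) *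
        (s j ^ 2 * Real.cos (2 * t * s j) * B j j) := by
    intro j
    obtain ⟨h0, h1⟩ := h2ts j
    obtain ⟨hs0, _⟩ := hs j
    have hcos : 0 < Real.cos (2 * t * s j) :=
      Real.cos_pos_of_mem_Ioo ⟨by linarith, h1⟩
    have hsin : 0 ≤ Real.sin (2 * t * s j) := Real.sin_nonneg_of_nonneg_of_le_pi h0
      (by linarith)
    have habs : |s j ^ 3 * Real.sin (2 * t * s j) * B j j| =
        s j ^ 3 * Real.sin (2 * t * s j) * B j j := by
      rw [abs_of_nonneg (mul_nonneg (mul_nonneg (pow_nonneg hs0 3) hsin) (hBnn j))]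
    rw [habs]
    have heq : s j ^ 3 * Real.sin (2 * t * s j) * B j j =
        (s j * Real.tan (2 * t * s j)) * (s j ^ 2 * Real.cos (2 * t * s j) * B j j) := by
      rw [Real.tan_eq_sin_div_cos]
      field_simp
      have hc : Real.cos (s j * 2 * t) ≠ 0 := by
        rw [show s j * 2 * t = 2 * t * s j by ring]; exact hcos.ne'
      exact (mul_div_cancel_right₀ _ hc).symm
    rw [heq]
    refine mul_le_mul_of_nonneg_right ?_
      (mul_nonneg (mul_nonneg (pow_nonneg hs0 2) hcos.le) (hBnn j))
    exact le_ciSup (f := fun j => s j * Real.tan (2 * t * s j))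
      (Set.Finite.bddAbove (Set.finite_range _)) j
  calc |∑ j, s j ^ 3 * Real.sin (2 * t * s j) * B j j| ≤
      ∑ j, |s j ^ 3 * Real.sin (2 * t * s j) * B j j| := Finset.abs_sum_le_sum_abs _ _
    _ ≤ ∑ j, (⨆ j, s j * Real.tan (2 * t * s j)) *
        (s j ^ 2 * Real.cos (2 * t * s j) * B j j) := Finset.sum_le_sum fun j _ => key j
    _ = _ := by rw [← Finset.mul_sum]
end

section
/- Let (V, ⟨·,·⟩) be a finite-dimensional real inner product space, let H, H_n be self-adjoint linear maps on V with H positive definite, and set H̃_n := H^{-1/2} ∘ H_n ∘ H^{-1/2}. Suppose ξ ∈ V satisfies ⟨g, ξ⟩ + (2/5)·⟨H_n ξ, ξ⟩ ≤ 0 for some g ∈ V, and that λ_min(H̃_n) > 0. Then ⟨Hξ, ξ⟩ ≤ (25/4)·λ_min(H̃_n)⁻²·⟨H⁻¹g, g⟩. -/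
open scoped RealInnerProductSpace

lemma my_symm_lb {V : Type*} [NormedAddCommGroup V] [InnerProductSpace ℝ V]
    [FiniteDimensional ℝ V] (T : V →ₗ[ℝ] V) (hT : T.IsSymmetric) (lam : ℝ)
    (hlb : ∀ r, Module.End.HasEigenvalue (T : Module.End ℝ V) r → lam ≤ r) (u : V) :
    lam * ‖u‖ ^ 2 ≤ ⟪T u, u⟫ := by
  classical
  have hrank : Module.finrank ℝ V = Module.finrank ℝ V := rfl
  set b := hT.eigenvectorBasis hrank with hb
  have hinner : ⟪T u, u⟫ = ∑ i, hT.eigenvalues hrank i * (b.repr u i) ^ 2 := by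
    rw [← b.repr.inner_map_map (T u) u]
    simp only [PiLp.inner_apply, RCLike.inner_apply, conj_trivial]
    refine Finset.sum_congr rfl fun i _ => ?_
    rw [hT.eigenvectorBasis_apply_self_apply hrank u i]
    simp only [RCLike.ofReal_real_eq_id, id_eq]
    ring
  have hnorm : ‖u‖ ^ 2 = ∑ i, (b.repr u i) ^ 2 := by
    rw [← real_inner_self_eq_norm_sq, ← b.repr.inner_map_map u u]
    simp only [PiLp.inner_apply, RCLike.inner_apply, conj_trivial]
    exact Finset.sum_congr rfl fun i _ => (sq _).symm
  rw [hinner, hnorm, Finset.mul_sum]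
  refine Finset.sum_le_sum fun i _ => ?_
  have h := hlb _ (hT.hasEigenvalue_eigenvalues hrank i)
  simp only [RCLike.ofReal_real_eq_id, id_eq] at h
  nlinarith [sq_nonneg (b.repr u i)]

theorem stmt_18 {V : Type*} [NormedAddCommGroup V] [InnerProductSpace ℝ V]
    [FiniteDimensional ℝ V]
    (H Hn : V →ₗ[ℝ] V) (hH : H.IsSymmetric) (hHn : Hn.IsSymmetric)
    (hHpos : ∀ x : V, x ≠ 0 → 0 < ⟪H x, x⟫)
    (Hhalf : V →ₗ[ℝ] V) (hHhalf : Hhalf.IsSymmetric)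
    (hHhalfpos : ∀ x : V, x ≠ 0 → 0 < ⟪Hhalf x, x⟫)
    (hHhalfsq : Hhalf ∘ₗ Hhalf = H)
    (Hinvhalf : V →ₗ[ℝ] V) (hinv₁ : Hhalf ∘ₗ Hinvhalf = LinearMap.id)
    (hinv₂ : Hinvhalf ∘ₗ Hhalf = LinearMap.id)
    (Hinv : V →ₗ[ℝ] V) (hinv₃ : H ∘ₗ Hinv = LinearMap.id) (hinv₄ : Hinv ∘ₗ H = LinearMap.id)
    (lam : ℝ)
    (hlam : IsLeast {r : ℝ |
      Module.End.HasEigenvalue ((Hinvhalf ∘ₗ Hn ∘ₗ Hinvhalf : V →ₗ[ℝ] V) : Module.End ℝ V) r} lam)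
    (hlampos : 0 < lam)
    (g ξ : V) (hξ : ⟪g, ξ⟫ + (2 / 5) * ⟪Hn ξ, ξ⟫ ≤ 0) :
    ⟪H ξ, ξ⟫ ≤ (25 / 4) * lam⁻¹ ^ 2 * ⟪Hinv g, g⟫ := by
  have happ₁ : ∀ x, Hhalf (Hinvhalf x) = x := fun x => congrArg (· x) hinv₁
  have happ₂ : ∀ x, Hinvhalf (Hhalf x) = x := fun x => congrArg (· x) hinv₂
  -- Hinvhalf is symmetric
  have hSinv : Hinvhalf.IsSymmetric := by
    intro x y
    calc ⟪Hinvhalf x, y⟫ = ⟪Hinvhalf x, Hhalf (Hinvhalf y)⟫ := by rw [happ₁]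
    _ = ⟪Hhalf (Hinvhalf x), Hinvhalf y⟫ := (hHhalf _ _).symm
    _ = ⟪x, Hinvhalf y⟫ := by rw [happ₁]
  set T : V →ₗ[ℝ] V := Hinvhalf ∘ₗ Hn ∘ₗ Hinvhalf with hT
  have hTsym : T.IsSymmetric := by
    intro x y
    simp only [hT, LinearMap.comp_apply]
    rw [hSinv, hHn, ← hSinv]
  set u : V := Hhalf ξ with hu
  set w : V := Hinvhalf g with hw
  have hTu : ⟪T u, u⟫ = ⟪Hn ξ, ξ⟫ := by
    simp only [hT, LinearMap.comp_apply, hu, happ₂]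
    rw [hSinv, happ₂]
  have hgu : ⟪w, u⟫ = ⟪g, ξ⟫ := by
    rw [hw, hu, hSinv, happ₂]
  have hHξ : ⟪H ξ, ξ⟫ = ‖u‖ ^ 2 := by
    rw [← hHhalfsq, LinearMap.comp_apply, hHhalf, hu, real_inner_self_eq_norm_sq]
  have hinvcomp : Hinvhalf ∘ₗ Hinvhalf = Hinv := by
    have h1 : H ∘ₗ (Hinvhalf ∘ₗ Hinvhalf) = LinearMap.id := by
      rw [← hHhalfsq]
      ext x
      simp [happ₁]
    calc Hinvhalf ∘ₗ Hinvhalf = LinearMap.id ∘ₗ (Hinvhalf ∘ₗ Hinvhalf) := by simp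
    _ = (Hinv ∘ₗ H) ∘ₗ (Hinvhalf ∘ₗ Hinvhalf) := by rw [hinv₄]
    _ = Hinv ∘ₗ (H ∘ₗ (Hinvhalf ∘ₗ Hinvhalf)) := by rw [LinearMap.comp_assoc]
    _ = Hinv := by rw [h1]; simp
  have hHg : ⟪Hinv g, g⟫ = ‖w‖ ^ 2 := by
    rw [← hinvcomp, LinearMap.comp_apply, hSinv, real_inner_self_eq_norm_sq]
  have hlow : lam * ‖u‖ ^ 2 ≤ ⟪T u, u⟫ :=
    my_symm_lb T hTsym lam (fun r hr => hlam.2 hr) u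
  have hCS : -⟪w, u⟫ ≤ ‖w‖ * ‖u‖ := by
    have := abs_real_inner_le_norm w u
    cases abs_le.mp this with
    | intro h1 h2 => linarith
  have hkey : (2/5) * (lam * ‖u‖ ^ 2) ≤ ‖w‖ * ‖u‖ := by
    have := hξ
    rw [← hgu, ← hTu] at this
    nlinarith [hlow]
  have hun : (0:ℝ) ≤ ‖u‖ := norm_nonneg u
  have hwn : (0:ℝ) ≤ ‖w‖ := norm_nonneg w
  have ht : ‖u‖ ≤ (5/2) * lam⁻¹ * ‖w‖ := by
    rcases eq_or_lt_of_le hun with h0 | h0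
    · rw [← h0]; positivity
    · have hl : lam * lam⁻¹ = 1 := mul_inv_cancel₀ hlampos.ne'
      have hli : 0 < lam⁻¹ := inv_pos.mpr hlampos
      nlinarith [hkey]
  rw [hHξ, hHg]
  have hli : 0 < lam⁻¹ := inv_pos.mpr hlampos
  nlinarith [ht, hun, hwn, mul_nonneg (mul_nonneg (by norm_num : (0:ℝ) ≤ 5/2) hli.le) hwn]
end
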